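/- Let X, Y ∈ ℝ^{n×n} and define L : ℝ^{n×n} → ℝ^{n×n} by L(A) = XAY. If L maps every inverse nonnegative matrix to an inverse nonnegative matrix, then either both X and Y are inverse nonnegative, or both −X and −Y are inverse nonnegative. -/

import Mathlib

def InvNonneg {n : ℕ} (M : Matrix (Fin n) (Fin n) ℝ) : Prop :=
  IsUnit M ∧ ∀ i j, 0 ≤ M⁻¹ i j

open Matrix

lemma aux_mul1 {n : ℕ} (E : Matrix (Fin n) (Fin n) ℝ) (hEE : E * E = E) (t s : ℝ) :
    (1 + t • E) * (1 + s • E) = 1 + (s + t + t * s) • E := by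
  simp only [mul_add, add_mul, one_mul, mul_one, Matrix.mul_smul, Matrix.smul_mul,
    smul_smul, hEE]
  module

lemma aux_mul0 {n : ℕ} (E : Matrix (Fin n) (Fin n) ℝ) (hEE : E * E = 0) (t s : ℝ) :
    (1 + t • E) * (1 + s • E) = 1 + (s + t) • E := by
  simp only [mul_add, add_mul, one_mul, mul_one, Matrix.mul_smul, Matrix.smul_mul,
    smul_smul, hEE, smul_zero, add_zero]
  module

lemma B_isUnit {n : ℕ} (k l : Fin n) (t : ℝ) (ht : 0 < t) :
    IsUnit (1 + t • single k l 1 : Matrix (Fin n) (Fin n) ℝ) := by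
  set E : Matrix (Fin n) (Fin n) ℝ := single k l 1 with hE
  by_cases hkl : l = k
  · subst hkl
    refine isUnit_iff_exists.mpr ⟨1 + (-(t/(1+t))) • E, ?_⟩
    refine (fun h => ⟨h, mul_eq_one_comm.mp h⟩) ?_
    have hEE : E * E = E := by
      rw [hE, Matrix.single_mul_single_same, one_mul]
    have h1t : (1:ℝ) + t ≠ 0 := by linarith
    rw [aux_mul1 E hEE]
    have : -(t / (1 + t)) + t + t * -(t / (1 + t)) = 0 := by
      field_simp; ring
    rw [this, zero_smul, add_zero]
  · refine isUnit_iff_exists.mpr ⟨1 + (-t) • E, ?_⟩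
    refine (fun h => ⟨h, mul_eq_one_comm.mp h⟩) ?_
    have hEE : E * E = 0 := by
      rw [hE]
      exact Matrix.single_mul_single_of_ne 1 k l k hkl 1
    rw [aux_mul0 E hEE]
    simp

lemma key {n : ℕ} (X Y : Matrix (Fin n) (Fin n) ℝ)
    (hL : ∀ A : Matrix (Fin n) (Fin n) ℝ, InvNonneg A → InvNonneg (X * A * Y))
    (i j k l : Fin n) : 0 ≤ Y⁻¹ i k * X⁻¹ l j := by
  set E : Matrix (Fin n) (Fin n) ℝ := single k l 1 with hE
  have main : ∀ t : ℝ, 0 < t →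
      0 ≤ (Y⁻¹ * X⁻¹) i j + t * (Y⁻¹ i k * X⁻¹ l j) := by
    intro t ht
    set B : Matrix (Fin n) (Fin n) ℝ := 1 + t • E with hB
    have hBu : IsUnit B := B_isUnit k l t ht
    have hBdet : IsUnit B.det := (isUnit_iff_isUnit_det B).mp hBu
    have hBinv : B⁻¹⁻¹ = B := Matrix.nonsing_inv_nonsing_inv B hBdet
    have hBpos : ∀ a b, 0 ≤ B a b := by
      intro a b
      rw [hB, Matrix.add_apply, Matrix.smul_apply, Matrix.one_apply, hE,
        Matrix.single]
      dsimp only [Matrix.of_apply]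
      split_ifs <;> simp only [smul_eq_mul, mul_one, mul_zero, add_zero, zero_add] <;> linarith
    have hA : InvNonneg (B⁻¹) := by
      exact ⟨Matrix.isUnit_nonsing_inv_iff.mpr hBu, fun a b => by rw [hBinv]; exact hBpos a b⟩
    have h2 := hL _ hA
    have hXu : IsUnit X := by
      have := h2.1
      have hdet := (isUnit_iff_isUnit_det _).mp this
      rw [Matrix.det_mul, Matrix.det_mul] at hdet
      exact (isUnit_iff_isUnit_det X).mpr (isUnit_of_mul_isUnit_left
        (isUnit_of_mul_isUnit_left hdet))
    have hYu : IsUnit Y := by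
      have hdet := (isUnit_iff_isUnit_det _).mp h2.1
      rw [Matrix.det_mul, Matrix.det_mul] at hdet
      exact (isUnit_iff_isUnit_det Y).mpr (isUnit_of_mul_isUnit_right hdet)
    have hinv : (X * B⁻¹ * Y)⁻¹ = Y⁻¹ * B * X⁻¹ := by
      rw [Matrix.mul_inv_rev, Matrix.mul_inv_rev, hBinv, mul_assoc]
    have h3 := h2.2 i j
    rw [hinv] at h3
    have hentry : (Y⁻¹ * B * X⁻¹) i j
        = (Y⁻¹ * X⁻¹) i j + t * (Y⁻¹ i k * X⁻¹ l j) := by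
      rw [hB, mul_add, add_mul, mul_one, Matrix.add_apply]
      congr 1
      rw [mul_smul_comm, smul_mul_assoc, Matrix.smul_apply, smul_eq_mul, mul_assoc]
      congr 1
      rw [Matrix.mul_apply]
      rw [Finset.sum_eq_single k]
      · rw [hE, Matrix.single_mul_apply_same, one_mul]
      · intro b _ hb
        rw [hE, Matrix.single_mul_apply_of_ne (h := hb), mul_zero]
      · simp
    rw [hentry] at h3
    exact h3
  by_contra hneg
  push_neg at hneg
  set c := (Y⁻¹ * X⁻¹) i j
  set d := Y⁻¹ i k * X⁻¹ l j
  have hd : d < 0 := hneg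
  have ht : 0 < (|c| + 1) / (-d) := div_pos (by positivity) (by linarith)
  have := main _ ht
  have : (|c| + 1) / (-d) * d = -(|c| + 1) := by
    rw [div_mul_eq_mul_div, div_eq_iff (by linarith : (-d) ≠ 0)]
    ring
  nlinarith [le_abs_self c, this]

theorem stmt7 (n : ℕ) (X Y : Matrix (Fin n) (Fin n) ℝ)
    (hL : ∀ A : Matrix (Fin n) (Fin n) ℝ, InvNonneg A → InvNonneg (X * A * Y)) :
    (InvNonneg X ∧ InvNonneg Y) ∨ (InvNonneg (-X) ∧ InvNonneg (-Y)) := by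
  rcases Nat.eq_zero_or_pos n with hn | hn
  · subst hn
    left
    refine ⟨⟨?_, fun i _ => Fin.elim0 i⟩, ⟨?_, fun i _ => Fin.elim0 i⟩⟩
    · rw [Subsingleton.elim X 1]; exact isUnit_one
    · rw [Subsingleton.elim Y 1]; exact isUnit_one
  -- get units
  have h1 : InvNonneg (1 : Matrix (Fin n) (Fin n) ℝ) := by
    refine ⟨isUnit_one, fun i j => ?_⟩
    have hone : (1 : Matrix (Fin n) (Fin n) ℝ)⁻¹ = 1 :=
      Matrix.inv_eq_right_inv (by rw [one_mul])
    rw [hone, Matrix.one_apply]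
    split <;> norm_num
  have h2 := hL 1 h1
  rw [mul_one] at h2
  have hdet := (isUnit_iff_isUnit_det _).mp h2.1
  rw [Matrix.det_mul] at hdet
  have hXu : IsUnit X := (isUnit_iff_isUnit_det X).mpr (isUnit_of_mul_isUnit_left hdet)
  have hYu : IsUnit Y := (isUnit_iff_isUnit_det Y).mpr (isUnit_of_mul_isUnit_right hdet)
  have hkey := key X Y hL
  -- Y⁻¹ ≠ 0
  have hQnz : ∃ i k, Y⁻¹ i k ≠ 0 := by
    by_contra h
    push_neg at h
    have : Y⁻¹ = 0 := by ext a b; exact h a b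
    have hYdet := (isUnit_iff_isUnit_det Y).mp hYu
    have := Matrix.nonsing_inv_mul Y hYdet
    rw [‹Y⁻¹ = 0›, zero_mul] at this
    have : (0 : Matrix (Fin n) (Fin n) ℝ) ≠ 1 := by
      intro h0
      have := congrArg (fun M : Matrix (Fin n) (Fin n) ℝ => M ⟨0, hn⟩ ⟨0, hn⟩) h0
      simp at this
    exact this ‹_›
  have hPnz : ∃ l j, X⁻¹ l j ≠ 0 := by
    by_contra h
    push_neg at h
    have : X⁻¹ = 0 := by ext a b; exact h a b
    have hXdet := (isUnit_iff_isUnit_det X).mp hXu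
    have := Matrix.nonsing_inv_mul X hXdet
    rw [‹X⁻¹ = 0›, zero_mul] at this
    have : (0 : Matrix (Fin n) (Fin n) ℝ) ≠ 1 := by
      intro h0
      have := congrArg (fun M : Matrix (Fin n) (Fin n) ℝ => M ⟨0, hn⟩ ⟨0, hn⟩) h0
      simp at this
    exact this ‹_›
  obtain ⟨i0, k0, hQ0⟩ := hQnz
  have hnXinv : (-X)⁻¹ = -(X⁻¹) := by
    apply Matrix.inv_eq_right_inv
    rw [neg_mul_neg]
    exact Matrix.mul_nonsing_inv X ((isUnit_iff_isUnit_det X).mp hXu)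
  have hnYinv : (-Y)⁻¹ = -(Y⁻¹) := by
    apply Matrix.inv_eq_right_inv
    rw [neg_mul_neg]
    exact Matrix.mul_nonsing_inv Y ((isUnit_iff_isUnit_det Y).mp hYu)
  rcases hQ0.lt_or_gt with hQneg | hQpos
  · -- Y⁻¹ i0 k0 < 0 : all X⁻¹ entries ≤ 0
    right
    have hPle : ∀ l j, X⁻¹ l j ≤ 0 := by
      intro l j
      have := hkey i0 j k0 l
      nlinarith
    obtain ⟨l0, j0, hP0⟩ := hPnz
    have hPlt : X⁻¹ l0 j0 < 0 := lt_of_le_of_ne (hPle l0 j0) hP0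
    have hQle : ∀ i k, Y⁻¹ i k ≤ 0 := by
      intro i k
      have := hkey i j0 k l0
      nlinarith
    constructor
    · exact ⟨hXu.neg, fun a b => by rw [hnXinv]; simpa using hPle a b⟩
    · exact ⟨hYu.neg, fun a b => by rw [hnYinv]; simpa using hQle a b⟩
  · -- Y⁻¹ i0 k0 > 0 : all X⁻¹ entries ≥ 0
    left
    have hPge : ∀ l j, 0 ≤ X⁻¹ l j := by
      intro l j
      have := hkey i0 j k0 l
      nlinarith
    obtain ⟨l0, j0, hP0⟩ := hPnz
    have hPlt : 0 < X⁻¹ l0 j0 := lt_of_le_of_ne (hPge l0 j0) (Ne.symm hP0)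
    have hQge : ∀ i k, 0 ≤ Y⁻¹ i k := by
      intro i k
      have := hkey i j0 k l0
      nlinarith
    exact ⟨⟨hXu, fun a b => hPge a b⟩, ⟨hYu, fun a b => hQge a b⟩⟩
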